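/- arXiv:math/0108044 — 2 statements merged into one kernel-verified Lean document; each statement's English description precedes it below -/
import Mathlib

section
/- Let ℓ₀ be a Lagrangian subspace of ℝⁿ ⊕ (ℝⁿ)* with the canonical symplectic form. Then there exists a unique pair (P, S), where P ⊆ ℝⁿ is a subspace and S : P × P → ℝ is a symmetric bilinear form, such that ℓ₀ = {(v, α) : v ∈ P and α|_P + S(v, ·) = 0 in P*}. -/
lemma aux_rank {K V W : Type*} [Field K] [AddCommGroup V] [Module K V]
    [AddCommGroup W] [Module K W]
    (ℓ : Submodule K (V × W)) [FiniteDimensional K ℓ] :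
    Module.finrank K (ℓ.map (LinearMap.fst K V W)) +
      Module.finrank K (ℓ.comap (LinearMap.inr K V W)) = Module.finrank K ℓ := by
  have hg : ∃ g : ↥ℓ →ₗ[K] V, LinearMap.range g = ℓ.map (LinearMap.fst K V W) ∧
      Module.finrank K (LinearMap.ker g) = Module.finrank K (ℓ.comap (LinearMap.inr K V W)) := by
    refine ⟨(LinearMap.fst K V W).domRestrict ℓ, LinearMap.range_domRestrict _ _, ?_⟩
    refine (LinearEquiv.finrank_eq ?_).symm
    exact
      { toFun := fun a => ⟨⟨((0 : V), (a : W)), a.2⟩, rfl⟩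
        invFun := fun x => ⟨x.1.1.2, by
          have hx : (x.1 : V × W).1 = 0 := x.2
          have hmem := x.1.2
          simp only [Submodule.mem_comap, LinearMap.coe_inr]
          rwa [← hx, Prod.mk.eta]⟩
        map_add' := by intro a b; ext : 3 <;> simp
        map_smul' := by intro c a; ext : 3 <;> simp
        left_inv := by intro a; rfl
        right_inv := by
          intro x
          apply Subtype.ext; apply Subtype.ext
          have hx : (x.1 : V × W).1 = 0 := x.2
          exact Prod.ext hx.symm rfl }
  obtain ⟨g, hrange, hker⟩ := hg
  have h1 : Module.finrank K (LinearMap.range g) + Module.finrank K (LinearMap.ker g)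
      = Module.finrank K ℓ := LinearMap.finrank_range_add_finrank_ker g
  rw [hrange, hker] at h1
  exact h1

lemma aux_ann (n : ℕ)
    (ℓ₀ : Submodule ℝ ((Fin n → ℝ) × Module.Dual ℝ (Fin n → ℝ)))
    (hdim : Module.finrank ℝ ℓ₀ = n)
    (hle : Submodule.comap (LinearMap.inr ℝ (Fin n → ℝ) (Module.Dual ℝ (Fin n → ℝ))) ℓ₀ ≤
      (Submodule.map (LinearMap.fst ℝ (Fin n → ℝ) (Module.Dual ℝ (Fin n → ℝ))) ℓ₀).dualAnnihilator)
    (α : Module.Dual ℝ (Fin n → ℝ))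
    (hα : ∀ w ∈ Submodule.map (LinearMap.fst ℝ (Fin n → ℝ) (Module.Dual ℝ (Fin n → ℝ))) ℓ₀, α w = 0) :
    ((0 : Fin n → ℝ), α) ∈ ℓ₀ := by
  set P := Submodule.map (LinearMap.fst ℝ (Fin n → ℝ) (Module.Dual ℝ (Fin n → ℝ))) ℓ₀ with hP
  set A := Submodule.comap (LinearMap.inr ℝ (Fin n → ℝ) (Module.Dual ℝ (Fin n → ℝ))) ℓ₀ with hA
  have hrk : Module.finrank ℝ P + Module.finrank ℝ A = n := by
    rw [hP, hA, aux_rank ℓ₀, hdim]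
  have hrkAnn : Module.finrank ℝ P + Module.finrank ℝ P.dualAnnihilator = n := by
    have h1 := Submodule.finrank_quotient_add_finrank P
    have h2 : Module.finrank ℝ ((Fin n → ℝ) ⧸ P) = Module.finrank ℝ P.dualAnnihilator :=
      (Subspace.quotEquivAnnihilator P).finrank_eq
    rw [h2, Module.finrank_fin_fun] at h1
    omega
  have hAeq : A = P.dualAnnihilator :=
    Submodule.eq_of_le_of_finrank_le hle (by omega)
  have h3 : α ∈ P.dualAnnihilator := (Submodule.mem_dualAnnihilator α).2 hα
  rw [← hAeq] at h3
  exact h3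

/-- every Lagrangian subspace `ℓ₀` of `ℝⁿ ⊕ (ℝⁿ)*` is determined by a unique
pair `(P, S)` with `P ⊆ ℝⁿ` a subspace and `S` a symmetric bilinear form on `P`, via
`ℓ₀ = {(v,α) : v ∈ P, α|_P + S(v,·) = 0}`. -/
theorem lagrangian_eq_pair_P_S (n : ℕ)
    (ω : ((Fin n → ℝ) × Module.Dual ℝ (Fin n → ℝ)) →
         ((Fin n → ℝ) × Module.Dual ℝ (Fin n → ℝ)) → ℝ)
    (hω : ∀ z w, ω z w = w.2 z.1 - z.2 w.1)
    (ℓ₀ : Submodule ℝ ((Fin n → ℝ) × Module.Dual ℝ (Fin n → ℝ)))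
    (hdim : Module.finrank ℝ ℓ₀ = n)
    (hiso : ∀ z ∈ ℓ₀, ∀ w ∈ ℓ₀, ω z w = 0) :
    ∃! PS : (P : Submodule ℝ (Fin n → ℝ)) × (↥P →ₗ[ℝ] ↥P →ₗ[ℝ] ℝ),
      (∀ x y : ↥PS.1, PS.2 x y = PS.2 y x) ∧
      (∀ (v : Fin n → ℝ) (α : Module.Dual ℝ (Fin n → ℝ)),
        (v, α) ∈ ℓ₀ ↔ ∃ hv : v ∈ PS.1, ∀ w : ↥PS.1, α w + PS.2 ⟨v, hv⟩ w = 0) := by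
  classical
  set P : Submodule ℝ (Fin n → ℝ) :=
    ℓ₀.map (LinearMap.fst ℝ (Fin n → ℝ) (Module.Dual ℝ (Fin n → ℝ))) with hP
  have hmem : ∀ v : ↥P, ∃ α : Module.Dual ℝ (Fin n → ℝ), ((v : Fin n → ℝ), α) ∈ ℓ₀ := by
    rintro ⟨v, hv⟩
    rcases Submodule.mem_map.1 hv with ⟨⟨v', α⟩, hz, rfl⟩
    exact ⟨α, hz⟩
  choose F hF using hmem
  have key : ∀ (v : Fin n → ℝ) (α β : Module.Dual ℝ (Fin n → ℝ)), (v, α) ∈ ℓ₀ → (v, β) ∈ ℓ₀ →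
      ∀ w : ↥P, α w = β w := by
    intro v α β h1 h2 w
    have hsub : ((0 : Fin n → ℝ), α - β) ∈ ℓ₀ := by
      have := ℓ₀.sub_mem h1 h2
      simpa using this
    have h3 := hiso _ hsub _ (hF w)
    simp only [hω, map_zero, zero_sub, neg_eq_zero, LinearMap.sub_apply, sub_eq_zero] at h3
    exact h3
  have keyF : ∀ (v : Fin n → ℝ) (α : Module.Dual ℝ (Fin n → ℝ)) (hv : v ∈ P),
      (v, α) ∈ ℓ₀ → ∀ w : ↥P, α w = F ⟨v, hv⟩ w :=
    fun v α hv h w => key v α (F ⟨v, hv⟩) h (hF ⟨v, hv⟩) w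
  set S : ↥P →ₗ[ℝ] ↥P →ₗ[ℝ] ℝ := LinearMap.mk₂ ℝ (fun v w => -(F v) w)
    (by
      intro v v' w
      have h : ((v : Fin n → ℝ) + (v' : Fin n → ℝ), F v + F v') ∈ ℓ₀ :=
        ℓ₀.add_mem (hF v) (hF v')
      have h2 := key _ _ _ (by simpa using h) (hF (v + v')) w
      simp only [LinearMap.add_apply] at h2
      show -(F (v + v')) ↑w = -(F v) ↑w + -(F v') ↑w
      linarith)
    (by
      intro c v w
      have h : (c • (v : Fin n → ℝ), c • F v) ∈ ℓ₀ := ℓ₀.smul_mem c (hF v)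
      have h2 := key _ _ _ (by simpa using h) (hF (c • v)) w
      simp only [LinearMap.smul_apply, smul_eq_mul] at h2
      show -(F (c • v)) ↑w = c • -(F v) ↑w
      simp only [smul_eq_mul]
      linarith)
    (by intro v w w'; simp [map_add]; ring)
    (by intro c v w; simp [map_smul]) with hS
  have hsymm : ∀ x y : ↥P, S x y = S y x := by
    intro x y
    have h3 := hiso _ (hF x) _ (hF y)
    rw [hω] at h3
    simp only [hS, LinearMap.mk₂_apply]
    have h4 : (F y) ↑x - (F x) ↑y = 0 := h3
    linarith
  have hann : ∀ α : Module.Dual ℝ (Fin n → ℝ), (∀ w ∈ P, α w = 0) →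
      ((0 : Fin n → ℝ), α) ∈ ℓ₀ := by
    intro α hα
    refine aux_ann n ℓ₀ hdim ?_ α hα
    intro β hβ
    rw [Submodule.mem_dualAnnihilator]
    intro w hw
    have h0 : ((0 : Fin n → ℝ), β) ∈ ℓ₀ := hβ
    have := key 0 β 0 h0 (by exact ℓ₀.zero_mem) ⟨w, hw⟩
    simpa using this
  have hchar : ∀ (v : Fin n → ℝ) (α : Module.Dual ℝ (Fin n → ℝ)),
      (v, α) ∈ ℓ₀ ↔ ∃ hv : v ∈ P, ∀ w : ↥P, α w + S ⟨v, hv⟩ w = 0 := by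
    intro v α
    constructor
    · intro h
      have hv : v ∈ P := ⟨(v, α), h, rfl⟩
      refine ⟨hv, fun w => ?_⟩
      have := keyF v α hv h w
      simp only [hS, LinearMap.mk₂_apply]
      linarith
    · rintro ⟨hv, hall⟩
      have hsub : ((0 : Fin n → ℝ), α - F ⟨v, hv⟩) ∈ ℓ₀ := by
        apply hann
        intro w hw
        have := hall ⟨w, hw⟩
        simp only [hS, LinearMap.mk₂_apply] at this
        simp only [LinearMap.sub_apply]
        linarith
      have hadd := ℓ₀.add_mem hsub (hF ⟨v, hv⟩)
      have heq : ((0 : Fin n → ℝ), α - F ⟨v, hv⟩) + ((v : Fin n → ℝ), F ⟨v, hv⟩) = (v, α) := by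
        simp [Prod.ext_iff]
      rwa [heq] at hadd
  refine ⟨⟨P, S⟩, ⟨hsymm, hchar⟩, ?_⟩
  rintro ⟨Q, T⟩ ⟨hTsymm, hTchar⟩
  have hQP : Q = P := by
    ext v
    constructor
    · intro hv
      obtain ⟨γ, hγ⟩ := LinearMap.exists_extend (-(T ⟨v, hv⟩))
      have hmem : (v, γ) ∈ ℓ₀ := by
        rw [hTchar]
        refine ⟨hv, fun w => ?_⟩
        have := LinearMap.congr_fun hγ w
        simp only [LinearMap.comp_apply, Submodule.coe_subtype, LinearMap.neg_apply] at this
        have hw : (⟨(w : Fin n → ℝ), w.2⟩ : ↥Q) = w := Subtype.ext rfl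
        rw [this]
        ring
      exact ⟨(v, γ), hmem, rfl⟩
    · intro hv
      have h := (hTchar v (F ⟨v, hv⟩)).1 (hF ⟨v, hv⟩)
      exact h.1
  subst hQP
  have hTS : T = S := by
    apply LinearMap.ext; intro v; apply LinearMap.ext; intro w
    obtain ⟨hv, hall⟩ := (hTchar v (F v)).1 (by simpa using hF v)
    have h1 := hall w
    have hv' : (⟨(v : Fin n → ℝ), hv⟩ : ↥P) = v := Subtype.ext rfl
    rw [hv'] at h1
    simp only [hS, LinearMap.mk₂_apply]
    linarith
  rw [hTS]
end

section
/- Let ℋ_red = {f ∈ H¹([a,b], ℝʳ) : f(a) = f(b) = 0} and let 𝔅 : [a,b] → Lin(ℝʳ, (ℝʳ)*) be a continuous family of invertible symmetric maps. Then the linear operator T : ℋ_red → L²([a,b], (ℝʳ)*)/Const, T(f) = 𝔅 f' mod Const, is a Fredholm operator of index zero, where Const is the r-dimensional subspace of constant maps. -/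
open MeasureTheory Matrix

/-- The space `H¹₀([a,b], ℝʳ)` of `H¹` maps vanishing at `a` and `b` (extended by `0`
outside `[a,b]`): absolutely continuous maps which are primitives of an `L²` function. -/
noncomputable def H10 (r : ℕ) (a b : ℝ) : Submodule ℝ (ℝ → (Fin r → ℝ)) where
  carrier := {f | (∀ t, t ∉ Set.Icc a b → f t = 0) ∧ f b = 0 ∧
    ∃ g : ℝ → (Fin r → ℝ),
      MemLp g 2 (volume.restrict (Set.Icc a b)) ∧
      (∀ t ∈ Set.Icc a b, IntervalIntegrable g volume a t) ∧
      ∀ t ∈ Set.Icc a b, f t = ∫ s in a..t, g s}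
  add_mem' := by
    rintro f1 f2 ⟨h01, hb1, g1, hg1, hi1, hr1⟩ ⟨h02, hb2, g2, hg2, hi2, hr2⟩
    refine ⟨fun t ht => by simp [h01 t ht, h02 t ht], by simp [hb1, hb2],
      g1 + g2, hg1.add hg2, fun t ht => (hi1 t ht).add (hi2 t ht), fun t ht => ?_⟩
    have := intervalIntegral.integral_add (hi1 t ht) (hi2 t ht)
    simp only [Pi.add_apply, hr1 t ht, hr2 t ht]
    rw [← this]
  zero_mem' := by
    refine ⟨fun t _ => rfl, rfl, 0, ?_, fun t ht => ?_, fun t ht => ?_⟩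
    · simpa using (memLp_const (0 : Fin r → ℝ) (μ := volume.restrict (Set.Icc a b))
        (p := 2))
    · exact intervalIntegrable_const
    · simp
  smul_mem' := by
    rintro c f ⟨h0, hb, g, hg, hi, hr⟩
    refine ⟨fun t ht => by simp [h0 t ht], by simp [hb],
      c • g, hg.const_smul c, fun t ht => (hi t ht).smul c, fun t ht => ?_⟩
    simp only [Pi.smul_apply, hr t ht]
    rw [← intervalIntegral.integral_smul]

section Helpers

variable {r : ℕ} {a b : ℝ}

lemma setIntegral_Icc_eq_intervalIntegral' {E : Type*} [NormedAddCommGroup E]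
    [NormedSpace ℝ E] (hab : a ≤ b) (F : ℝ → E) :
    ∫ t, F t ∂(volume.restrict (Set.Icc a b)) = ∫ t in a..b, F t := by
  rw [intervalIntegral.integral_of_le hab,
    Measure.restrict_congr_set MeasureTheory.Ioc_ae_eq_Icc]

lemma norm_mulVec_le' (M : Matrix (Fin r) (Fin r) ℝ) (v : Fin r → ℝ) {C : ℝ}
    (hC : 0 ≤ C) (hM : ∀ i j, ‖M i j‖ ≤ C) : ‖M.mulVec v‖ ≤ r * C * ‖v‖ := by
  have h0 : (0:ℝ) ≤ r * C * ‖v‖ := by positivity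
  rw [pi_norm_le_iff_of_nonneg h0]
  intro i
  have h1 : ‖M.mulVec v i‖ ≤ ∑ j : Fin r, ‖M i j * v j‖ := by
    simpa [Matrix.mulVec, dotProduct] using
      norm_sum_le Finset.univ (fun j => M i j * v j)
  refine h1.trans ?_
  have h2 : ∀ j : Fin r, ‖M i j * v j‖ ≤ C * ‖v‖ := fun j => by
    rw [norm_mul]
    exact mul_le_mul (hM i j) (norm_le_pi_norm v j) (norm_nonneg _) hC
  calc ∑ j : Fin r, ‖M i j * v j‖ ≤ ∑ _j : Fin r, C * ‖v‖ :=
        Finset.sum_le_sum fun j _ => h2 j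
    _ = r * C * ‖v‖ := by simp [mul_assoc]

lemma memLp_mulVec' {A : ℝ → Matrix (Fin r) (Fin r) ℝ}
    (hA : ContinuousOn A (Set.Icc a b)) {g : ℝ → Fin r → ℝ}
    (hg : MemLp g 2 (volume.restrict (Set.Icc a b))) :
    MemLp (fun t => (A t).mulVec (g t)) 2 (volume.restrict (Set.Icc a b)) := by
  have hA' : ContinuousOn (fun t => (Matrix.of.symm (A t) : Fin r → Fin r → ℝ)) (Set.Icc a b) := hA
  obtain ⟨C, hC⟩ := IsCompact.exists_bound_of_continuousOn isCompact_Icc hA'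
  have hmeas : AEStronglyMeasurable (fun t => (A t).mulVec (g t))
      (volume.restrict (Set.Icc a b)) := by
    have hAm := hA'.aestronglyMeasurable (μ := volume) measurableSet_Icc
    have hc : Continuous (fun p : (Fin r → Fin r → ℝ) × (Fin r → ℝ) =>
        (Matrix.of p.1).mulVec p.2) :=
      Continuous.matrix_mulVec (continuous_pi fun i => continuous_pi fun j =>
        (continuous_apply j).comp ((continuous_apply i).comp continuous_fst)) continuous_snd
    exact hc.comp_aestronglyMeasurable (hAm.prodMk hg.aestronglyMeasurable)
  refine hg.of_le_mul (c := r * |C|) hmeas ?_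
  filter_upwards [ae_restrict_mem measurableSet_Icc] with t ht
  have hentry : ∀ i j, ‖A t i j‖ ≤ |C| := fun i j =>
    ((norm_le_pi_norm (A t i) j).trans ((norm_le_pi_norm (Matrix.of.symm (A t)) i))).trans
      ((hC t ht).trans (le_abs_self C))
  calc ‖(A t).mulVec (g t)‖ ≤ r * |C| * ‖g t‖ :=
        norm_mulVec_le' _ _ (abs_nonneg C) hentry
    _ = (r * |C|) * ‖g t‖ := rfl

lemma isFiniteRestrictIcc (a b : ℝ) : IsFiniteMeasure (volume.restrict (Set.Icc a b)) :=
  ⟨by rw [Measure.restrict_apply_univ]; exact measure_Icc_lt_top⟩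

lemma integrable_of_memLp2' {g : ℝ → Fin r → ℝ}
    (hg : MemLp g 2 (volume.restrict (Set.Icc a b))) :
    Integrable g (volume.restrict (Set.Icc a b)) := by
  haveI := isFiniteRestrictIcc a b
  exact memLp_one_iff_integrable.mp (hg.mono_exponent one_le_two)

lemma intervalIntegrable_of_memLp2' {g : ℝ → Fin r → ℝ}
    (hg : MemLp g 2 (volume.restrict (Set.Icc a b))) {t : ℝ} (ht : t ∈ Set.Icc a b) :
    IntervalIntegrable g volume a t := by
  have h1 : IntegrableOn g (Set.Icc a b) volume := integrable_of_memLp2' hg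
  rw [intervalIntegrable_iff_integrableOn_Ioc_of_le ht.1]
  exact h1.mono_set (fun x hx => ⟨hx.1.le, hx.2.trans ht.2⟩)

lemma mem_H10_of_primitive (hab : a ≤ b) {g : ℝ → Fin r → ℝ}
    (hg : MemLp g 2 (volume.restrict (Set.Icc a b)))
    (hint : ∀ t ∈ Set.Icc a b, IntervalIntegrable g volume a t)
    (hb0 : (∫ s in a..b, g s) = 0) :
    Set.indicator (Set.Icc a b) (fun t => ∫ s in a..t, g s) ∈ H10 r a b := by
  refine ⟨fun t ht => Set.indicator_of_notMem ht _, ?_, g, hg, hint,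
    fun t ht => Set.indicator_of_mem ht _⟩
  rw [Set.indicator_of_mem (Set.right_mem_Icc.mpr hab) _]
  exact hb0

lemma continuousOn_inv_matrix {A : ℝ → Matrix (Fin r) (Fin r) ℝ}
    (hA : ContinuousOn A (Set.Icc a b)) (hinv : ∀ t ∈ Set.Icc a b, IsUnit (A t)) :
    ContinuousOn (fun t => (A t)⁻¹) (Set.Icc a b) := by
  have hdet : ContinuousOn (fun t => (A t).det) (Set.Icc a b) :=
    (Continuous.matrix_det continuous_id).comp_continuousOn hA
  have hadj : ContinuousOn (fun t => (A t).adjugate) (Set.Icc a b) :=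
    (Continuous.matrix_adjugate continuous_id).comp_continuousOn hA
  have hdet0 : ∀ t ∈ Set.Icc a b, (A t).det ≠ 0 := fun t ht =>
    IsUnit.ne_zero ((Matrix.isUnit_iff_isUnit_det _).mp (hinv t ht))
  refine ((hdet.inv₀ hdet0).smul hadj).congr fun t ht => ?_
  rw [Matrix.inv_def, Ring.inverse_eq_inv']
  rfl

end Helpers

lemma mem_H10_iff {r : ℕ} {a b : ℝ} {f : ℝ → Fin r → ℝ} :
    f ∈ H10 r a b ↔ ((∀ t, t ∉ Set.Icc a b → f t = 0) ∧ f b = 0 ∧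
    ∃ g : ℝ → (Fin r → ℝ),
      MemLp g 2 (volume.restrict (Set.Icc a b)) ∧
      (∀ t ∈ Set.Icc a b, IntervalIntegrable g volume a t) ∧
      ∀ t ∈ Set.Icc a b, f t = ∫ s in a..t, g s) := Iff.rfl

set_option maxHeartbeats 4000000 in
set_option synthInstance.maxHeartbeats 400000 in
/-- for a continuous family `𝔅(t)` of invertible symmetric maps, the
operator `T : H¹₀ → L²/Const`, `T(f) = 𝔅 f' mod Const`, is a Fredholm operator of
index zero: its kernel and cokernel are finite dimensional of the same dimension. -/
theorem reduced_operator_fredholm_index_zero (r : ℕ) (a b : ℝ) (hab : a < b)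
    (𝔅 : ℝ → Matrix (Fin r) (Fin r) ℝ)
    (hcont : ContinuousOn 𝔅 (Set.Icc a b))
    (hsym : ∀ t ∈ Set.Icc a b, (𝔅 t)ᵀ = 𝔅 t)
    (hinv : ∀ t ∈ Set.Icc a b, IsUnit (𝔅 t))
    (Const : Submodule ℝ (Lp (Fin r → ℝ) 2 (volume.restrict (Set.Icc a b))))
    (hConst : ∀ h : Lp (Fin r → ℝ) 2 (volume.restrict (Set.Icc a b)),
      h ∈ Const ↔ ∃ c : Fin r → ℝ,
        (h : ℝ → Fin r → ℝ) =ᵐ[volume.restrict (Set.Icc a b)] fun _ => c)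
    (T : ↥(H10 r a b) →ₗ[ℝ]
      (Lp (Fin r → ℝ) 2 (volume.restrict (Set.Icc a b)) ⧸ Const))
    (hT : ∀ (f : ↥(H10 r a b)) (g : ℝ → Fin r → ℝ),
      MemLp g 2 (volume.restrict (Set.Icc a b)) →
      (∀ t ∈ Set.Icc a b, (f : ℝ → Fin r → ℝ) t = ∫ s in a..t, g s) →
      ∀ hBg : MemLp (fun t => (𝔅 t).mulVec (g t)) 2 (volume.restrict (Set.Icc a b)),
        T f = Submodule.Quotient.mk (MemLp.toLp _ hBg)) :
    FiniteDimensional ℝ (LinearMap.ker T) ∧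
    FiniteDimensional ℝ
      ((Lp (Fin r → ℝ) 2 (volume.restrict (Set.Icc a b)) ⧸ Const) ⧸ LinearMap.range T) ∧
    Module.finrank ℝ (LinearMap.ker T) =
      Module.finrank ℝ
        ((Lp (Fin r → ℝ) 2 (volume.restrict (Set.Icc a b)) ⧸ Const) ⧸
          LinearMap.range T) := by
  classical
  have hab' : a ≤ b := hab.le
  haveI : IsFiniteMeasure (volume.restrict (Set.Icc a b)) := isFiniteRestrictIcc a b
  have hdetu : ∀ t ∈ Set.Icc a b, IsUnit (𝔅 t).det := fun t ht =>
    (Matrix.isUnit_iff_isUnit_det _).mp (hinv t ht)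
  have hBi : ContinuousOn (fun t => (𝔅 t)⁻¹) (Set.Icc a b) :=
    continuousOn_inv_matrix hcont hinv
  have hBBi : ∀ t ∈ Set.Icc a b, ∀ v : Fin r → ℝ,
      (𝔅 t).mulVec ((𝔅 t)⁻¹.mulVec v) = v := fun t ht v => by
    rw [Matrix.mulVec_mulVec, Matrix.mul_nonsing_inv _ (hdetu t ht), Matrix.one_mulVec]
  have hBiB : ∀ t ∈ Set.Icc a b, ∀ v : Fin r → ℝ,
      (𝔅 t)⁻¹.mulVec ((𝔅 t).mulVec v) = v := fun t ht v => by
    rw [Matrix.mulVec_mulVec, Matrix.nonsing_inv_mul _ (hdetu t ht), Matrix.one_mulVec]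
  have hBiIntPi : IntervalIntegrable
      (fun t => (Matrix.of.symm ((𝔅 t)⁻¹) : Fin r → Fin r → ℝ)) volume a b := by
    apply ContinuousOn.intervalIntegrable
    rw [Set.uIcc_of_le hab']
    exact hBi
  set M : Matrix (Fin r) (Fin r) ℝ :=
    Matrix.of (∫ t in a..b, (Matrix.of.symm ((𝔅 t)⁻¹) : Fin r → Fin r → ℝ)) with hMdef
  have hMc : ∀ c : Fin r → ℝ, (∫ t in a..b, ((𝔅 t)⁻¹).mulVec c) = M.mulVec c := by
    intro c
    let L0 : (Fin r → Fin r → ℝ) →ₗ[ℝ] (Fin r → ℝ) :=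
      { toFun := fun A => (Matrix.of A).mulVec c
        map_add' := fun A B => Matrix.add_mulVec _ _ _
        map_smul' := fun s A => by
          simpa using Matrix.smul_mulVec s (Matrix.of A) c }
    exact (LinearMap.toContinuousLinearMap L0).intervalIntegral_comp_comm hBiIntPi
  have hBic_cont : ∀ c : Fin r → ℝ,
      ContinuousOn (fun t => ((𝔅 t)⁻¹).mulVec c) (Set.Icc a b) := by
    intro c
    have h1 : Continuous (fun A : Matrix (Fin r) (Fin r) ℝ => A.mulVec c) :=
      Continuous.matrix_mulVec continuous_id continuous_const
    exact h1.comp_continuousOn hBi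
  have hBic_ii : ∀ (c : Fin r → ℝ) (t : ℝ), t ∈ Set.Icc a b →
      IntervalIntegrable (fun s => ((𝔅 s)⁻¹).mulVec c) volume a t := by
    intro c t ht
    apply ContinuousOn.intervalIntegrable
    apply (hBic_cont c).mono
    rw [Set.uIcc_of_le ht.1]
    exact Set.Icc_subset_Icc le_rfl ht.2
  have hBic_mem : ∀ c : Fin r → ℝ,
      MemLp (fun t => ((𝔅 t)⁻¹).mulVec c) 2 (volume.restrict (Set.Icc a b)) :=
    fun c => memLp_mulVec' hBi (memLp_const c)
  set fInt : (Fin r → ℝ) → (ℝ → Fin r → ℝ) :=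
    fun c => Set.indicator (Set.Icc a b) (fun t => ∫ s in a..t, ((𝔅 s)⁻¹).mulVec c)
    with hfIntdef
  have hmemH10 : ∀ c : Fin r → ℝ, M.mulVec c = 0 → fInt c ∈ H10 r a b := by
    intro c hc
    apply mem_H10_of_primitive hab' (hBic_mem c) (fun t ht => hBic_ii c t ht)
    rw [hMc c]; exact hc
  have hfInt_add : ∀ c d : Fin r → ℝ, fInt (c + d) = fInt c + fInt d := by
    intro c d; funext t
    by_cases ht : t ∈ Set.Icc a b
    · simp only [hfIntdef, Set.indicator_of_mem ht, Pi.add_apply]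
      rw [← intervalIntegral.integral_add (hBic_ii c t ht) (hBic_ii d t ht)]
      congr 1; funext s; rw [Matrix.mulVec_add]
    · simp only [hfIntdef, Set.indicator_of_notMem ht, Pi.add_apply, add_zero]
  have hfInt_smul : ∀ (s : ℝ) (c : Fin r → ℝ), fInt (s • c) = s • fInt c := by
    intro s c; funext t
    by_cases ht : t ∈ Set.Icc a b
    · simp only [hfIntdef, Set.indicator_of_mem ht, Pi.smul_apply]
      rw [← intervalIntegral.integral_smul]
      congr 1; funext u; rw [Matrix.mulVec_smul]
    · simp only [hfIntdef, Set.indicator_of_notMem ht, Pi.smul_apply, smul_zero]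
  set K := LinearMap.ker (Matrix.mulVecLin M) with hKdef
  have hKmem : ∀ c : K, M.mulVec c.1 = 0 := by
    intro c
    have h : Matrix.mulVecLin M c.1 = 0 := LinearMap.mem_ker.mp c.2
    rwa [Matrix.mulVecLin_apply] at h
  let φ0 : K →ₗ[ℝ] ↥(H10 r a b) :=
    { toFun := fun c => ⟨fInt c.1, hmemH10 c.1 (hKmem c)⟩
      map_add' := fun x y => Subtype.ext (hfInt_add x.1 y.1)
      map_smul' := fun s x => Subtype.ext (hfInt_smul s x.1) }
  have hTφ0 : ∀ c : K, T (φ0 c) = 0 := by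
    intro c
    have hBg : MemLp (fun t => (𝔅 t).mulVec (((𝔅 t)⁻¹).mulVec c.1)) 2
        (volume.restrict (Set.Icc a b)) := by
      apply MemLp.ae_eq (f := fun _ => c.1) ?_ (memLp_const c.1)
      filter_upwards [ae_restrict_mem measurableSet_Icc] with t ht
      exact (hBBi t ht c.1).symm
    have hrep : ∀ t ∈ Set.Icc a b, ((φ0 c : ↥(H10 r a b)) : ℝ → Fin r → ℝ) t
        = ∫ s in a..t, ((𝔅 s)⁻¹).mulVec c.1 := by
      intro t ht
      show fInt c.1 t = _
      simp only [hfIntdef]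
      exact Set.indicator_of_mem ht _
    rw [hT (φ0 c) _ (hBic_mem c.1) hrep hBg, Submodule.Quotient.mk_eq_zero, hConst]
    refine ⟨c.1, (MemLp.coeFn_toLp hBg).trans ?_⟩
    filter_upwards [ae_restrict_mem measurableSet_Icc] with t ht
    exact hBBi t ht c.1
  let φ : K →ₗ[ℝ] ↥(LinearMap.ker T) :=
    LinearMap.codRestrict _ φ0 (fun c => LinearMap.mem_ker.mpr (hTφ0 c))
  have hφinj : Function.Injective φ := by
    rw [injective_iff_map_eq_zero]
    intro c hc
    have h1 : φ0 c = 0 := congrArg Subtype.val hc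
    have hf0 : fInt c.1 = 0 := congrArg Subtype.val h1
    simp only [hfIntdef] at hf0
    have hint0 : ∀ t ∈ Set.Icc a b, (∫ s in a..t, ((𝔅 s)⁻¹).mulVec c.1) = 0 := by
      intro t ht
      have h3 := congrFun hf0 t
      rwa [Set.indicator_of_mem ht] at h3
    set t0 : ℝ := (a + b) / 2 with ht0def
    have ht0a : a < t0 := by rw [ht0def]; linarith
    have ht0b : t0 < b := by rw [ht0def]; linarith
    have ht0' : t0 ∈ Set.Icc a b := ⟨ht0a.le, ht0b.le⟩
    have hnh : Set.Icc a b ∈ nhds t0 := Icc_mem_nhds ht0a ht0b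
    have hderiv : HasDerivAt (fun u => ∫ s in a..u, ((𝔅 s)⁻¹).mulVec c.1)
        (((𝔅 t0)⁻¹).mulVec c.1) t0 :=
      intervalIntegral.integral_hasDerivAt_right (hBic_ii c.1 t0 ht0')
        ⟨Set.Icc a b, hnh, ((hBic_cont c.1).aestronglyMeasurable measurableSet_Icc)⟩
        ((hBic_cont c.1).continuousAt hnh)
    have heq : (fun _ : ℝ => (0 : Fin r → ℝ)) =ᶠ[nhds t0]
        (fun u => ∫ s in a..u, ((𝔅 s)⁻¹).mulVec c.1) := by
      filter_upwards [hnh] with u hu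
      exact (hint0 u hu).symm
    have h0 : ((𝔅 t0)⁻¹).mulVec c.1 = 0 :=
      ((hderiv.congr_of_eventuallyEq heq).unique (hasDerivAt_const t0 0))
    have hc1 : c.1 = 0 := by
      have h4 := hBBi t0 ht0' c.1
      rw [h0, Matrix.mulVec_zero] at h4
      exact h4.symm
    exact Subtype.ext hc1
  have hφsurj : Function.Surjective φ := by
    rintro ⟨f, hfker⟩
    obtain ⟨hf0, hfb, g, hg, hgint, hgrep⟩ := mem_H10_iff.mp f.2
    have hBg : MemLp (fun t => (𝔅 t).mulVec (g t)) 2 (volume.restrict (Set.Icc a b)) :=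
      memLp_mulVec' hcont hg
    have hfT : T f = 0 := LinearMap.mem_ker.mp hfker
    rw [hT f g hg hgrep hBg, Submodule.Quotient.mk_eq_zero, hConst] at hfT
    obtain ⟨c, hc⟩ := hfT
    have hgae : g =ᵐ[volume.restrict (Set.Icc a b)] fun t => ((𝔅 t)⁻¹).mulVec c := by
      filter_upwards [ae_restrict_mem measurableSet_Icc,
        (MemLp.coeFn_toLp hBg).symm.trans hc] with t ht h2
      rw [← h2, hBiB t ht]
    have hrep2 : ∀ t ∈ Set.Icc a b, (f : ℝ → Fin r → ℝ) t
        = ∫ s in a..t, ((𝔅 s)⁻¹).mulVec c := by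
      intro t ht
      rw [hgrep t ht]
      apply intervalIntegral.integral_congr_ae
      have hae' : ∀ᵐ x ∂volume, x ∈ Set.Icc a b → g x = ((𝔅 x)⁻¹).mulVec c :=
        (ae_restrict_iff' measurableSet_Icc).mp hgae
      filter_upwards [hae'] with x hx hxmem
      rw [Set.uIoc_of_le ht.1] at hxmem
      exact hx ⟨hxmem.1.le, hxmem.2.trans ht.2⟩
    have hMc0 : M.mulVec c = 0 := by
      rw [← hMc c]
      rw [← hrep2 b (Set.right_mem_Icc.mpr hab')]
      exact hfb
    refine ⟨⟨c, LinearMap.mem_ker.mpr (by rw [Matrix.mulVecLin_apply]; exact hMc0)⟩, ?_⟩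
    apply Subtype.ext; apply Subtype.ext
    funext t
    show fInt c t = (f : ℝ → Fin r → ℝ) t
    by_cases ht : t ∈ Set.Icc a b
    · simp only [hfIntdef]
      rw [Set.indicator_of_mem ht]
      exact (hrep2 t ht).symm
    · simp only [hfIntdef]
      rw [Set.indicator_of_notMem ht]
      exact (hf0 t ht).symm
  let e1 : K ≃ₗ[ℝ] ↥(LinearMap.ker T) := LinearEquiv.ofBijective φ ⟨hφinj, hφsurj⟩
  -- cokernel side
  set Rng := LinearMap.range (Matrix.mulVecLin M) with hRngdef
  have hIntBih : ∀ h : Lp (Fin r → ℝ) 2 (volume.restrict (Set.Icc a b)),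
      Integrable (fun t => ((𝔅 t)⁻¹).mulVec (h t)) (volume.restrict (Set.Icc a b)) :=
    fun h => integrable_of_memLp2' (memLp_mulVec' hBi (Lp.memLp h))
  let Ψ : Lp (Fin r → ℝ) 2 (volume.restrict (Set.Icc a b)) →ₗ[ℝ] ((Fin r → ℝ) ⧸ Rng) :=
    { toFun := fun h => Submodule.Quotient.mk
        (∫ t, ((𝔅 t)⁻¹).mulVec (h t) ∂(volume.restrict (Set.Icc a b)))
      map_add' := by
        intro h1 h2
        have heq : (∫ t, ((𝔅 t)⁻¹).mulVec ((h1 + h2 : Lp _ _ _) t)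
              ∂(volume.restrict (Set.Icc a b)))
            = (∫ t, ((𝔅 t)⁻¹).mulVec (h1 t) ∂(volume.restrict (Set.Icc a b)))
              + ∫ t, ((𝔅 t)⁻¹).mulVec (h2 t) ∂(volume.restrict (Set.Icc a b)) := by
          rw [← integral_add (hIntBih h1) (hIntBih h2)]
          apply integral_congr_ae
          filter_upwards [Lp.coeFn_add h1 h2] with t ht
          rw [ht]
          simp [Matrix.mulVec_add]
        simp only [heq, Submodule.Quotient.mk_add]
      map_smul' := by
        intro s h1
        have heq : (∫ t, ((𝔅 t)⁻¹).mulVec ((s • h1 : Lp _ _ _) t)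
              ∂(volume.restrict (Set.Icc a b)))
            = s • ∫ t, ((𝔅 t)⁻¹).mulVec (h1 t) ∂(volume.restrict (Set.Icc a b)) := by
          rw [← integral_smul]
          apply integral_congr_ae
          filter_upwards [Lp.coeFn_smul s h1] with t ht
          rw [ht]
          simp [Matrix.mulVec_smul]
        simp only [heq, Submodule.Quotient.mk_smul, RingHom.id_apply] }
  have hΨapp : ∀ hh : Lp (Fin r → ℝ) 2 (volume.restrict (Set.Icc a b)),
      Ψ hh = Submodule.Quotient.mk
        (∫ t, ((𝔅 t)⁻¹).mulVec (hh t) ∂(volume.restrict (Set.Icc a b))) :=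
    fun hh => rfl
  have hΨconst : ∀ (c : Fin r → ℝ) (h : Lp (Fin r → ℝ) 2 (volume.restrict (Set.Icc a b))),
      (h : ℝ → Fin r → ℝ) =ᵐ[volume.restrict (Set.Icc a b)] (fun _ => c) →
      (∫ t, ((𝔅 t)⁻¹).mulVec (h t) ∂(volume.restrict (Set.Icc a b))) = M.mulVec c := by
    intro c h hc
    have h1 : (∫ t, ((𝔅 t)⁻¹).mulVec (h t) ∂(volume.restrict (Set.Icc a b)))
        = ∫ t, ((𝔅 t)⁻¹).mulVec c ∂(volume.restrict (Set.Icc a b)) := by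
      apply integral_congr_ae
      filter_upwards [hc] with t ht
      rw [ht]
    rw [h1, setIntegral_Icc_eq_intervalIntegral' hab', hMc]
  have hConstKer : Const ≤ LinearMap.ker Ψ := by
    intro h hh
    obtain ⟨c, hc⟩ := (hConst h).mp hh
    rw [LinearMap.mem_ker, hΨapp, Submodule.Quotient.mk_eq_zero, hΨconst c h hc]
    exact ⟨c, by simp⟩
  let Ψ1 : (Lp (Fin r → ℝ) 2 (volume.restrict (Set.Icc a b)) ⧸ Const) →ₗ[ℝ]
      ((Fin r → ℝ) ⧸ Rng) := Submodule.liftQ Const Ψ hConstKer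
  have hΨ1mk : ∀ h, Ψ1 (Submodule.Quotient.mk h) = Ψ h := fun h => rfl
  have hRangeKer : LinearMap.range T ≤ LinearMap.ker Ψ1 := by
    rintro x ⟨f, rfl⟩
    obtain ⟨hf0, hfb, g, hg, hgint, hgrep⟩ := mem_H10_iff.mp f.2
    have hBg : MemLp (fun t => (𝔅 t).mulVec (g t)) 2 (volume.restrict (Set.Icc a b)) :=
      memLp_mulVec' hcont hg
    rw [LinearMap.mem_ker, hT f g hg hgrep hBg, hΨ1mk, hΨapp,
      Submodule.Quotient.mk_eq_zero]
    have h1 : (∫ t, ((𝔅 t)⁻¹).mulVec ((MemLp.toLp _ hBg) t)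
          ∂(volume.restrict (Set.Icc a b)))
        = ∫ t, g t ∂(volume.restrict (Set.Icc a b)) := by
      apply integral_congr_ae
      filter_upwards [MemLp.coeFn_toLp hBg, ae_restrict_mem measurableSet_Icc] with t ht htI
      rw [ht, hBiB t htI]
    have h2 : (∫ t, g t ∂(volume.restrict (Set.Icc a b))) = 0 := by
      rw [setIntegral_Icc_eq_intervalIntegral' hab',
        ← hgrep b (Set.right_mem_Icc.mpr hab')]
      exact hfb
    rw [h1, h2]
    exact zero_mem _
  let Ψ2 : ((Lp (Fin r → ℝ) 2 (volume.restrict (Set.Icc a b)) ⧸ Const)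
      ⧸ LinearMap.range T) →ₗ[ℝ] ((Fin r → ℝ) ⧸ Rng) :=
    Submodule.liftQ (LinearMap.range T) Ψ1 hRangeKer
  have hΨ2mk : ∀ hh : Lp (Fin r → ℝ) 2 (volume.restrict (Set.Icc a b)),
      Ψ2 (Submodule.Quotient.mk (Submodule.Quotient.mk hh)) = Ψ hh := fun hh => rfl
  have hΨ2surj : Function.Surjective Ψ2 := by
    intro x
    obtain ⟨v, rfl⟩ := Submodule.Quotient.mk_surjective _ x
    set gv : ℝ → Fin r → ℝ := fun t => ((b - a)⁻¹ • 𝔅 t).mulVec v with hgvdef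
    have hcont' : ContinuousOn (fun t => (b - a)⁻¹ • 𝔅 t) (Set.Icc a b) :=
      (continuous_const_smul ((b - a)⁻¹)).comp_continuousOn hcont
    have hgv : MemLp gv 2 (volume.restrict (Set.Icc a b)) :=
      memLp_mulVec' hcont' (memLp_const v)
    refine ⟨Submodule.Quotient.mk (Submodule.Quotient.mk (MemLp.toLp gv hgv)), ?_⟩
    rw [hΨ2mk, hΨapp]
    have h1 : (∫ t, ((𝔅 t)⁻¹).mulVec ((MemLp.toLp gv hgv) t)
          ∂(volume.restrict (Set.Icc a b)))
        = ∫ _t, ((b - a)⁻¹ • v) ∂(volume.restrict (Set.Icc a b)) := by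
      apply integral_congr_ae
      filter_upwards [MemLp.coeFn_toLp hgv, ae_restrict_mem measurableSet_Icc] with t ht htI
      rw [ht]
      simp only [hgvdef]
      rw [Matrix.smul_mulVec, Matrix.mulVec_smul, hBiB t htI]
    rw [h1, integral_const]
    have h2 : ((volume.restrict (Set.Icc a b)) Set.univ).toReal = b - a := by
      rw [Measure.restrict_apply_univ, Real.volume_Icc,
        ENNReal.toReal_ofReal (by linarith : (0:ℝ) ≤ b - a)]
    rw [measureReal_def, h2, smul_smul, mul_inv_cancel₀ (by linarith : b - a ≠ 0), one_smul]
  have hΨ2inj : Function.Injective Ψ2 := by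
    rw [← LinearMap.ker_eq_bot, eq_bot_iff]
    intro x hx
    obtain ⟨y, rfl⟩ := Submodule.Quotient.mk_surjective _ x
    obtain ⟨h, rfl⟩ := Submodule.Quotient.mk_surjective _ y
    simp only [SetLike.mem_coe, LinearMap.mem_ker] at hx
    rw [hΨ2mk, hΨapp] at hx
    have hx' := hx
    have hx'' : (∫ t, ((𝔅 t)⁻¹).mulVec (h t) ∂(volume.restrict (Set.Icc a b))) ∈ Rng :=
      (Submodule.Quotient.mk_eq_zero _).mp hx'
    obtain ⟨c, hc⟩ := hx''
    rw [Matrix.mulVecLin_apply] at hc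
    set g0 : ℝ → Fin r → ℝ :=
      fun t => ((𝔅 t)⁻¹).mulVec (h t) - ((𝔅 t)⁻¹).mulVec c with hg0def
    have hg0mem : MemLp g0 2 (volume.restrict (Set.Icc a b)) :=
      (memLp_mulVec' hBi (Lp.memLp h)).sub (hBic_mem c)
    have hg0int : ∀ t ∈ Set.Icc a b, IntervalIntegrable g0 volume a t :=
      fun t ht => intervalIntegrable_of_memLp2' hg0mem ht
    have hg0b : (∫ s in a..b, g0 s) = 0 := by
      rw [← setIntegral_Icc_eq_intervalIntegral' hab']
      simp only [hg0def]
      rw [integral_sub (hIntBih h) (integrable_of_memLp2' (hBic_mem c))]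
      rw [show (∫ t, ((𝔅 t)⁻¹).mulVec c ∂(volume.restrict (Set.Icc a b)))
          = M.mulVec c from by rw [setIntegral_Icc_eq_intervalIntegral' hab', hMc]]
      rw [← hc]
      exact sub_self _
    have hfmem := mem_H10_of_primitive hab' hg0mem hg0int hg0b
    set f : ↥(H10 r a b) := ⟨_, hfmem⟩ with hfdef
    have hBg0 : MemLp (fun t => (𝔅 t).mulVec (g0 t)) 2 (volume.restrict (Set.Icc a b)) :=
      memLp_mulVec' hcont hg0mem
    have hrepf : ∀ t ∈ Set.Icc a b, (f : ℝ → Fin r → ℝ) t = ∫ s in a..t, g0 s := by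
      intro t ht
      show (Set.Icc a b).indicator (fun u => ∫ s in a..u, g0 s) t = _
      exact Set.indicator_of_mem ht _
    have hTf := hT f g0 hg0mem hrepf hBg0
    have hmk : (Submodule.Quotient.mk h :
        Lp (Fin r → ℝ) 2 (volume.restrict (Set.Icc a b)) ⧸ Const) = T f := by
      rw [hTf, Submodule.Quotient.eq, hConst]
      refine ⟨c, ?_⟩
      filter_upwards [Lp.coeFn_sub h (MemLp.toLp _ hBg0), MemLp.coeFn_toLp hBg0,
        ae_restrict_mem measurableSet_Icc] with t h1 h2 h3
      rw [h1]
      simp only [Pi.sub_apply]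
      rw [h2]
      show h t - (𝔅 t).mulVec (g0 t) = c
      simp only [hg0def]
      rw [Matrix.mulVec_sub, hBBi t h3, hBBi t h3]
      abel
    simp only [SetLike.mem_coe, Submodule.mem_bot]
    rw [show (Submodule.Quotient.mk (Submodule.Quotient.mk h : _ ⧸ Const) :
        _ ⧸ LinearMap.range T) = Submodule.Quotient.mk (T f) from by rw [hmk]]
    rw [Submodule.Quotient.mk_eq_zero]
    exact LinearMap.mem_range_self T f
  let e2 := LinearEquiv.ofBijective Ψ2 ⟨hΨ2inj, hΨ2surj⟩
  haveI hfinK : FiniteDimensional ℝ K := inferInstance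
  haveI hfinQ : FiniteDimensional ℝ ((Fin r → ℝ) ⧸ Rng) := inferInstance
  haveI hk : FiniteDimensional ℝ ↥(LinearMap.ker T) := Module.Finite.equiv e1
  haveI hq : FiniteDimensional ℝ
      ((Lp (Fin r → ℝ) 2 (volume.restrict (Set.Icc a b)) ⧸ Const)
        ⧸ LinearMap.range T) := Module.Finite.equiv e2.symm
  refine ⟨hk, hq, ?_⟩
  have h1 : Module.finrank ℝ ↥(LinearMap.ker T) = Module.finrank ℝ K :=
    (LinearEquiv.finrank_eq e1).symm
  have h2 : Module.finrank ℝ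
      ((Lp (Fin r → ℝ) 2 (volume.restrict (Set.Icc a b)) ⧸ Const)
        ⧸ LinearMap.range T) = Module.finrank ℝ ((Fin r → ℝ) ⧸ Rng) :=
    LinearEquiv.finrank_eq e2
  rw [h1, h2]
  have h3 : Module.finrank ℝ ((Fin r → ℝ) ⧸ Rng) + Module.finrank ℝ Rng
      = Module.finrank ℝ (Fin r → ℝ) := Submodule.finrank_quotient_add_finrank Rng
  have h4 : Module.finrank ℝ Rng + Module.finrank ℝ K
      = Module.finrank ℝ (Fin r → ℝ) :=
    LinearMap.finrank_range_add_finrank_ker (Matrix.mulVecLin M)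
  omega
end
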